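/- Let u, v be complex numbers with Im u > 0 and Im v > 0, let k, l be positive integers, and let b ∈ ℝ. Then the integrals ∫_ε^R e^{ibη} (e^{iu η^{l/k}} − e^{iv η^{l/k}})/η dη are bounded uniformly over all 0 < ε ≤ R < ∞: there is a constant C depending only on u, v, l/k such that the absolute value of the integral is at most C. -/

import Mathlib

open MeasureTheory Complex Set

lemma aux_exp_lip (w₁ w₂ : ℂ) (h₁ : w₁.re ≤ 0) (h₂ : w₂.re ≤ 0) :
    ‖Complex.exp w₁ - Complex.exp w₂‖ ≤ ‖w₁ - w₂‖ := by
  have key := norm_image_sub_le_of_norm_deriv_le_segment_01'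
    (f := fun s : ℝ => Complex.exp (w₂ + s • (w₁ - w₂)))
    (f' := fun s : ℝ => Complex.exp (w₂ + s • (w₁ - w₂)) * (w₁ - w₂))
    (C := ‖w₁ - w₂‖) ?_ ?_
  · simpa using key
  · intro s _
    have h : HasDerivAt (fun s : ℝ => w₂ + s • (w₁ - w₂)) (w₁ - w₂) s := by
      simpa using ((hasDerivAt_id s).smul_const (w₁ - w₂)).const_add w₂
    exact (h.cexp).hasDerivWithinAt
  · intro s hs
    rw [norm_mul]
    have hre : (w₂ + s • (w₁ - w₂)).re ≤ 0 := by
      obtain ⟨hs0, hs1⟩ := hs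
      simp only [Complex.add_re, Complex.smul_re, Complex.sub_re, smul_eq_mul]
      nlinarith [mul_nonneg hs0 (sub_nonneg.mpr h₁)]
    have : ‖Complex.exp (w₂ + s • (w₁ - w₂))‖ ≤ 1 := by
      rw [Complex.norm_exp]
      exact Real.exp_le_one_iff.mpr hre
    nlinarith [norm_nonneg (w₁ - w₂)]

lemma aux_exp_decay {c t : ℝ} (hc : 0 < c) (ht : 0 < t) :
    Real.exp (-(c * t)) ≤ (c * t)⁻¹ := by
  rw [Real.exp_neg]
  exact inv_anti₀ (mul_pos hc ht) (by linarith [Real.add_one_le_exp (c * t)])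

theorem stmt_13 (u v : ℂ) (hu : 0 < u.im) (hv : 0 < v.im)
    (k l : ℕ) (hk : 0 < k) (hl : 0 < l) :
    ∃ C : ℝ, ∀ b ε R : ℝ, 0 < ε → ε ≤ R →
      ‖∫ η in ε..R, Complex.exp (Complex.I * b * η) *
          (Complex.exp (Complex.I * u * ((η ^ ((l : ℝ) / k) : ℝ) : ℂ)) -
           Complex.exp (Complex.I * v * ((η ^ ((l : ℝ) / k) : ℝ) : ℂ))) / (η : ℂ)‖ ≤ C := by
  set α : ℝ := (l : ℝ) / k with hα_def
  have hα : 0 < α := div_pos (by exact_mod_cast hl) (by exact_mod_cast hk)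
  set M : ℝ := ‖u - v‖ with hM_def
  set K : ℝ := 1 / u.im + 1 / v.im with hK_def
  have hK : 0 ≤ K := by positivity
  set g : ℝ → ℝ := fun η => if η ≤ 1 then M * η ^ (α - 1) else K * η ^ (-α - 1) with hg_def
  -- nonnegativity of g
  have hg_nonneg : ∀ η : ℝ, 0 ≤ η → 0 ≤ g η := by
    intro η hη
    simp only [hg_def]
    split
    · exact mul_nonneg (norm_nonneg _) (Real.rpow_nonneg hη _)
    · exact mul_nonneg hK (Real.rpow_nonneg hη _)
  -- integrability of g on (0, ∞)
  have hg_int : IntegrableOn g (Ioi 0) := by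
    rw [← Ioc_union_Ioi_eq_Ioi (zero_le_one' ℝ)]
    apply IntegrableOn.union
    · apply IntegrableOn.congr_fun (f := fun η : ℝ => M * η ^ (α - 1))
      · exact ((intervalIntegral.intervalIntegrable_rpow' (by linarith)).1).const_mul M
      · intro η hη
        simp only [hg_def, if_pos hη.2]
      · exact measurableSet_Ioc
    · apply IntegrableOn.congr_fun (f := fun η : ℝ => K * η ^ (-α - 1))
      · exact (integrableOn_Ioi_rpow_of_lt (by linarith) one_pos).const_mul K
      · intro η hη
        simp only [hg_def, if_neg (not_le.mpr (show (1:ℝ) < η from hη))]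
      · exact measurableSet_Ioi
  refine ⟨∫ η in Ioi (0:ℝ), g η, fun b ε R hε hεR => ?_⟩
  have hsub : Ioc ε R ⊆ Ioi (0:ℝ) := fun x hx => hε.trans hx.1
  have hgi : IntervalIntegrable g volume ε R := by
    rw [intervalIntegrable_iff_integrableOn_Ioc_of_le hεR]
    exact hg_int.mono_set hsub
  -- pointwise bound
  have hbound : ∀ η ∈ Set.uIoc ε R,
      ‖Complex.exp (Complex.I * b * η) *
          (Complex.exp (Complex.I * u * ((η ^ α : ℝ) : ℂ)) -
           Complex.exp (Complex.I * v * ((η ^ α : ℝ) : ℂ))) / (η : ℂ)‖ ≤ g η := by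
    intro η hη
    rw [uIoc_of_le hεR] at hη
    have hη0 : 0 < η := hε.trans hη.1
    have ht0 : 0 < η ^ α := Real.rpow_pos_of_pos hη0 α
    set t : ℝ := η ^ α with ht_def
    have hb1 : ‖Complex.exp (Complex.I * b * η)‖ = 1 := by
      simp [Complex.norm_exp]
    have hnorm : ‖Complex.exp (Complex.I * b * η) *
        (Complex.exp (Complex.I * u * (t : ℂ)) - Complex.exp (Complex.I * v * (t : ℂ))) / (η : ℂ)‖
        = ‖Complex.exp (Complex.I * u * (t : ℂ)) - Complex.exp (Complex.I * v * (t : ℂ))‖ / η := by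
      rw [norm_div, norm_mul, hb1, one_mul, Complex.norm_real, Real.norm_eq_abs,
        abs_of_pos hη0]
    rw [hnorm]
    have hreu : (Complex.I * u * (t : ℂ)).re = -(u.im * t) := by
      simp [Complex.mul_re, Complex.mul_im]
    have hrev : (Complex.I * v * (t : ℂ)).re = -(v.im * t) := by
      simp [Complex.mul_re, Complex.mul_im]
    by_cases hle : η ≤ 1
    · -- small η
      have hlip : ‖Complex.exp (Complex.I * u * (t : ℂ)) - Complex.exp (Complex.I * v * (t : ℂ))‖
          ≤ ‖u - v‖ * t := by
        have := aux_exp_lip (Complex.I * u * (t : ℂ)) (Complex.I * v * (t : ℂ))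
          (by rw [hreu]; nlinarith) (by rw [hrev]; nlinarith)
        calc ‖Complex.exp (Complex.I * u * (t : ℂ)) - Complex.exp (Complex.I * v * (t : ℂ))‖
            ≤ ‖Complex.I * u * (t : ℂ) - Complex.I * v * (t : ℂ)‖ := this
          _ = ‖u - v‖ * t := by
              have : Complex.I * u * (t : ℂ) - Complex.I * v * (t : ℂ)
                  = Complex.I * (u - v) * (t : ℂ) := by ring
              rw [this, norm_mul, norm_mul, Complex.norm_I,
                one_mul, Complex.norm_real, Real.norm_eq_abs, abs_of_pos ht0]
      have hval : g η = M * η ^ (α - 1) := by simp only [hg_def, if_pos hle]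
      rw [hval]
      have : M * η ^ (α - 1) = (M * t) / η := by
        rw [Real.rpow_sub hη0, Real.rpow_one, ht_def]
        ring
      rw [this, hM_def]
      gcongr
    · -- large η
      push_neg at hle
      have hdecay : ‖Complex.exp (Complex.I * u * (t : ℂ)) - Complex.exp (Complex.I * v * (t : ℂ))‖
          ≤ (u.im * t)⁻¹ + (v.im * t)⁻¹ := by
        calc ‖Complex.exp (Complex.I * u * (t : ℂ)) - Complex.exp (Complex.I * v * (t : ℂ))‖
            ≤ ‖Complex.exp (Complex.I * u * (t : ℂ))‖ + ‖Complex.exp (Complex.I * v * (t : ℂ))‖ :=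
              norm_sub_le _ _
          _ ≤ (u.im * t)⁻¹ + (v.im * t)⁻¹ := by
              rw [Complex.norm_exp, Complex.norm_exp,
                hreu, hrev]
              exact add_le_add (aux_exp_decay hu ht0) (aux_exp_decay hv ht0)
      have hval : g η = K * η ^ (-α - 1) := by simp only [hg_def, if_neg (not_le.mpr hle)]
      rw [hval]
      have heq : K * η ^ (-α - 1) = ((u.im * t)⁻¹ + (v.im * t)⁻¹) / η := by
        rw [Real.rpow_sub hη0, Real.rpow_one, Real.rpow_neg hη0.le, ht_def, hK_def]
        field_simp
      rw [heq]
      gcongr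
  calc ‖∫ η in ε..R, Complex.exp (Complex.I * b * η) *
          (Complex.exp (Complex.I * u * ((η ^ α : ℝ) : ℂ)) -
           Complex.exp (Complex.I * v * ((η ^ α : ℝ) : ℂ))) / (η : ℂ)‖
      ≤ |∫ η in ε..R, g η| :=
        (intervalIntegral.norm_integral_le_of_norm_le hεR
          (Filter.Eventually.of_forall fun η hη => hbound η (by rwa [uIoc_of_le hεR])) hgi).trans
          (le_abs_self _)
    _ = ∫ η in Ioc ε R, g η := by
        rw [intervalIntegral.integral_of_le hεR, _root_.abs_of_nonneg
          (setIntegral_nonneg measurableSet_Ioc fun x hx => hg_nonneg x (le_of_lt (hε.trans hx.1)))]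
    _ ≤ ∫ η in Ioi (0:ℝ), g η :=
        setIntegral_mono_set hg_int
          ((ae_restrict_iff' measurableSet_Ioi).mpr
            (Filter.Eventually.of_forall fun x hx => hg_nonneg x (le_of_lt hx)))
          (HasSubset.Subset.eventuallyLE hsub)
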